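/- arXiv:1607.06982 — 2 statements merged into one kernel-verified Lean document; each statement's English description precedes it below -/
import Mathlib

section
/- For n variables x = (x_1,...,x_n) and factorial parameters a, the factorial complete homogeneous function h_m(x|a), defined as the coefficient of t^m in ∏_{i=1}^n 1/(1-t x_i) · ∏_{j=1}^{m+n-1}(1+t a_j), satisfies the recursion h_m(x|a) = h_m(x'|a) + (x_n + a_{m+n-1})·h_{m-1}(x|a), where x' = (x_1,...,x_{n-1}). -/
open PowerSeries Finset

noncomputable section

/-- `geom x` is the formal power series `1/(1-tx) = ∑ xⁿ tⁿ`. -/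
def geom {R : Type*} [CommRing R] (x : R) : PowerSeries R := PowerSeries.mk fun n => x ^ n

/-- `lin a` is the formal power series `1 + t·a`. -/
def lin {R : Type*} [CommRing R] (a : R) : PowerSeries R :=
  1 + PowerSeries.C a * PowerSeries.X

/-- Factorial power `(x|a)^m = (x+a₁)(x+a₂)···(x+a_m)`. -/
def factPow {R : Type*} [CommRing R] (x : R) (a : ℕ → R) (m : ℕ) : R :=
  ∏ k ∈ Finset.range m, (x + a (k + 1))


lemma geom_eq {R : Type*} [CommRing R] (x : R) :
    geom x = 1 + PowerSeries.C x * PowerSeries.X * geom x := by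
  ext n
  cases n with
  | zero => simp [geom]
  | succ k =>
    rw [mul_assoc]
    simp [geom, PowerSeries.coeff_succ_X_mul, pow_succ, mul_comm]

lemma coeff_mul_lin {R : Type*} [CommRing R] (P : PowerSeries R) (a : R) (k : ℕ) :
    PowerSeries.coeff (k + 1) (P * lin a) =
      PowerSeries.coeff (k + 1) P + a * PowerSeries.coeff k P := by
  rw [lin, mul_add, mul_one, map_add,
    show P * (PowerSeries.C a * PowerSeries.X) = PowerSeries.C a * (P * PowerSeries.X) by ring]
  simp [PowerSeries.coeff_succ_mul_X]

lemma coeff_mul_geom {R : Type*} [CommRing R] (P : PowerSeries R) (y : R) (k : ℕ) :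
    PowerSeries.coeff (k + 1) (P * geom y) =
      PowerSeries.coeff (k + 1) P + y * PowerSeries.coeff k (P * geom y) := by
  conv_lhs => rw [geom_eq y]
  rw [mul_add, mul_one, map_add]
  congr 1
  rw [show P * (PowerSeries.C y * PowerSeries.X * geom y)
      = PowerSeries.C y * (PowerSeries.X * (P * geom y)) by ring]
  simp [PowerSeries.coeff_succ_X_mul]

/-- Recursion hₘ(x|a) = hₘ(x'|a) + (x_n + a_{m+n-1})·h_{m-1}(x|a), x' = (x₁,…,x_{n-1}). -/
theorem stmt7 {R : Type*} [CommRing R] (n m : ℕ) (hn : 1 ≤ n) (hm : 1 ≤ m) (x a : ℕ → R) :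
    PowerSeries.coeff m ((∏ i ∈ Finset.Icc 1 n, geom (x i)) *
        ∏ k ∈ Finset.range (m + n - 1), lin (a (k + 1))) =
    PowerSeries.coeff m ((∏ i ∈ Finset.Icc 1 (n - 1), geom (x i)) *
        ∏ k ∈ Finset.range (m + n - 2), lin (a (k + 1))) +
    (x n + a (m + n - 1)) * PowerSeries.coeff (m - 1)
      ((∏ i ∈ Finset.Icc 1 n, geom (x i)) *
        ∏ k ∈ Finset.range (m + n - 2), lin (a (k + 1))) := by
  obtain ⟨q, rfl⟩ : ∃ q, m = q + 1 := ⟨m - 1, by omega⟩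
  have hF : (∏ i ∈ Finset.Icc 1 n, geom (x i)) =
      (∏ i ∈ Finset.Icc 1 (n - 1), geom (x i)) * geom (x n) := by
    conv_lhs => rw [show n = (n - 1) + 1 by omega]
    rw [Finset.prod_Icc_succ_top (by omega), show (n - 1) + 1 = n by omega]
  rw [show q + 1 + n - 1 = (q + 1 + n - 2) + 1 by omega, Finset.prod_range_succ,
    show (q + 1 + n - 2) + 1 = q + 1 + n - 1 by omega, ← mul_assoc, coeff_mul_lin,
    Nat.add_sub_cancel]
  rw [hF, show (∏ i ∈ Finset.Icc 1 (n - 1), geom (x i)) * geom (x n) *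
      ∏ k ∈ Finset.range (q + 1 + n - 2), lin (a (k + 1)) =
      ((∏ i ∈ Finset.Icc 1 (n - 1), geom (x i)) *
        ∏ k ∈ Finset.range (q + 1 + n - 2), lin (a (k + 1))) * geom (x n) by ring,
    coeff_mul_geom]
  ring
end
end

section
/- Symplectic combination identity: (x_i + y_i)·q̃_{m}(x^{(i)}, x̄^{(i)}; y^{(i+1)}, ȳ^{(i)} | a) + (x̄_i + ȳ_i)·q̃_{m}(x^{(i+1)}, x̄^{(i)}; y^{(i+1)}, ȳ^{(i+1)} | a) = (x_i + y_i + x̄_i + ȳ_i)·q^{sp}_{m}(x^{(i)}, x̄^{(i)}; y^{(i+1)}, ȳ^{(i+1)} | a), where q^{sp}_m(x^{(d)},x̄^{(d)};y^{(d+1)},ȳ^{(d+1)}|a) is the coefficient of t^m in [∏_{j=d+1}^n (1+t y_j)(1+t ȳ_j) · ∏_{k=1}^{m}(1+t a_k)] / [∏_{i=d}^n (1-t x_i)(1-t x̄_i)]. -/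
open PowerSeries Finset

noncomputable section

/-- Flagged factorial complete function h_m(x_p,…,x_q | a), zero for m < 0. -/
def hfun {R : Type*} [CommRing R] (x a : ℕ → R) (p q : ℕ) (m : ℤ) : R :=
  if m < 0 then 0 else
    PowerSeries.coeff m.toNat ((∏ ℓ ∈ Finset.Icc p q, geom (x ℓ)) *
      ∏ k ∈ Finset.range (m.toNat + q - p), lin (a (k + 1)))

lemma one_sub_mul_geom {R : Type*} [CommRing R] (x : R) :
    (1 - PowerSeries.C x * PowerSeries.X) * geom x = 1 := by
  ext n
  cases n with
  | zero => simp [geom]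
  | succ k =>
      rw [sub_mul, one_mul, map_sub, mul_assoc, PowerSeries.coeff_C_mul,
        PowerSeries.coeff_succ_X_mul]
      simp [geom, pow_succ, mul_comm]

lemma key {R : Type*} [CommRing R] (m : ℕ) (xi yi xbi ybi : R)
    (hx : xi * xbi = 1) (hy : yi * ybi = 1) (F : PowerSeries R) :
    (xi + yi) * PowerSeries.coeff m (lin ybi * F) +
      (xbi + ybi) * PowerSeries.coeff m ((1 - PowerSeries.C xi * PowerSeries.X) * F) =
    (xi + yi + xbi + ybi) * PowerSeries.coeff m F := by
  rw [show lin ybi * F = F + PowerSeries.C ybi * (PowerSeries.X * F) from by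
      rw [lin]; ring,
    show (1 - PowerSeries.C xi * PowerSeries.X) * F
        = F - PowerSeries.C xi * (PowerSeries.X * F) from by ring,
    map_add, map_sub, PowerSeries.coeff_C_mul, PowerSeries.coeff_C_mul]
  cases m with
  | zero =>
      simp
      ring
  | succ k =>
      rw [PowerSeries.coeff_succ_X_mul]
      linear_combination (PowerSeries.coeff k F) * hy - (PowerSeries.coeff k F) * hx

/-- Symplectic combination identity relating q̃ₘ and q^{sp}ₘ. -/
theorem stmt18 {R : Type*} [CommRing R] (n m i : ℕ) (hi1 : 1 ≤ i) (hin : i ≤ n)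
    (x xb y yb a : ℕ → R)
    (hxinv : ∀ ℓ, x ℓ * xb ℓ = 1) (hyinv : ∀ ℓ, y ℓ * yb ℓ = 1) :
    (x i + y i) * PowerSeries.coeff m
        ((∏ ℓ ∈ Finset.Icc i n, geom (x ℓ)) * (∏ ℓ ∈ Finset.Icc i n, geom (xb ℓ)) *
          (∏ j ∈ Finset.Icc (i + 1) n, lin (y j)) * (∏ j ∈ Finset.Icc i n, lin (yb j)) *
          ∏ k ∈ Finset.range m, lin (a (k + 1))) +
    (xb i + yb i) * PowerSeries.coeff m
        ((∏ ℓ ∈ Finset.Icc (i + 1) n, geom (x ℓ)) * (∏ ℓ ∈ Finset.Icc i n, geom (xb ℓ)) *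
          (∏ j ∈ Finset.Icc (i + 1) n, lin (y j)) *
          (∏ j ∈ Finset.Icc (i + 1) n, lin (yb j)) *
          ∏ k ∈ Finset.range m, lin (a (k + 1))) =
    (x i + y i + xb i + yb i) * PowerSeries.coeff m
        ((∏ ℓ ∈ Finset.Icc i n, geom (x ℓ)) * (∏ ℓ ∈ Finset.Icc i n, geom (xb ℓ)) *
          (∏ j ∈ Finset.Icc (i + 1) n, lin (y j)) *
          (∏ j ∈ Finset.Icc (i + 1) n, lin (yb j)) *
          ∏ k ∈ Finset.range m, lin (a (k + 1))) := by
  have hIcc : Finset.Icc i n = insert i (Finset.Icc (i + 1) n) := by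
    ext j; simp [Finset.mem_Icc]; omega
  have hnot : i ∉ Finset.Icc (i + 1) n := by simp
  set F : PowerSeries R :=
    (∏ ℓ ∈ Finset.Icc i n, geom (x ℓ)) * (∏ ℓ ∈ Finset.Icc i n, geom (xb ℓ)) *
      (∏ j ∈ Finset.Icc (i + 1) n, lin (y j)) *
      (∏ j ∈ Finset.Icc (i + 1) n, lin (yb j)) *
      ∏ k ∈ Finset.range m, lin (a (k + 1)) with hF
  have hx' : (∏ ℓ ∈ Finset.Icc i n, geom (x ℓ))
      = geom (x i) * ∏ ℓ ∈ Finset.Icc (i + 1) n, geom (x ℓ) := by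
    rw [hIcc, Finset.prod_insert hnot]
  have hyb' : (∏ j ∈ Finset.Icc i n, lin (yb j))
      = lin (yb i) * ∏ j ∈ Finset.Icc (i + 1) n, lin (yb j) := by
    rw [hIcc, Finset.prod_insert hnot]
  have h1 : (∏ ℓ ∈ Finset.Icc i n, geom (x ℓ)) * (∏ ℓ ∈ Finset.Icc i n, geom (xb ℓ)) *
      (∏ j ∈ Finset.Icc (i + 1) n, lin (y j)) * (∏ j ∈ Finset.Icc i n, lin (yb j)) *
      ∏ k ∈ Finset.range m, lin (a (k + 1)) = lin (yb i) * F := by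
    rw [hF, hyb']; ring
  have hg := one_sub_mul_geom (x i)
  have h2 : (∏ ℓ ∈ Finset.Icc (i + 1) n, geom (x ℓ)) * (∏ ℓ ∈ Finset.Icc i n, geom (xb ℓ)) *
      (∏ j ∈ Finset.Icc (i + 1) n, lin (y j)) * (∏ j ∈ Finset.Icc (i + 1) n, lin (yb j)) *
      ∏ k ∈ Finset.range m, lin (a (k + 1)) =
      (1 - PowerSeries.C (x i) * PowerSeries.X) * F := by
    calc (∏ ℓ ∈ Finset.Icc (i + 1) n, geom (x ℓ)) * (∏ ℓ ∈ Finset.Icc i n, geom (xb ℓ)) *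
        (∏ j ∈ Finset.Icc (i + 1) n, lin (y j)) * (∏ j ∈ Finset.Icc (i + 1) n, lin (yb j)) *
        ∏ k ∈ Finset.range m, lin (a (k + 1))
        = ((1 - PowerSeries.C (x i) * PowerSeries.X) * geom (x i)) *
          ((∏ ℓ ∈ Finset.Icc (i + 1) n, geom (x ℓ)) * (∏ ℓ ∈ Finset.Icc i n, geom (xb ℓ)) *
          (∏ j ∈ Finset.Icc (i + 1) n, lin (y j)) * (∏ j ∈ Finset.Icc (i + 1) n, lin (yb j)) *
          ∏ k ∈ Finset.range m, lin (a (k + 1))) := by rw [hg, one_mul]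
      _ = (1 - PowerSeries.C (x i) * PowerSeries.X) * F := by rw [hF, hx']; ring
  rw [h1, h2]
  exact key m (x i) (y i) (xb i) (yb i) (hxinv i) (hyinv i) F
end
end
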